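/- Let λ > 0 and define Tf = 1 + 2λ(S₁f + S₂f) acting on measurable f : (0,∞) → [0,∞). Then for every integer n ≥ 1, the n-th iterate satisfies ‖Tⁿ1‖ ≤ ( 1 + Σ_{k=1}^n (8λ·Ω⁺(b,a))^k )·‖1‖, where 1 denotes the constant function one. In particular, if λ < 1/(8·Ω⁺(b,a)) then sup_n ‖Tⁿ1‖ < ∞, and hence the nondecreasing limit f_∞ = lim_{n→∞} Tⁿ1 is finite almost everywhere and satisfies the integral equation f_∞(x) = 1 + 2λ ∫₀ˣ (1/a(y))·exp(−2B(y)) ( ∫_y^∞ f_∞(z)·exp(2B(z)) dz ) dy for all x > 0. -/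

import Mathlib

open MeasureTheory Set Filter
open scoped ENNReal

/-- `B(x) = ∫₀ˣ (b/a)(y) dy`. -/
noncomputable def Bfun (a b : ℝ → ℝ) (x : ℝ) : ℝ := ∫ y in (0:ℝ)..x, b y / a y

/-- `‖f‖ = ∫₀^∞ f(x) e^{2B(x)} dx` for nonnegative (extended-real-valued) `f`. -/
noncomputable def wNorm (a b : ℝ → ℝ) (f : ℝ → ℝ≥0∞) : ℝ≥0∞ :=
  ∫⁻ x in Ioi (0:ℝ), f x * ENNReal.ofReal (Real.exp (2 * Bfun a b x))

/-- `S₁f(x) = (∫₀ˣ (1/a) e^{-2B} dz)(∫ₓ^∞ f e^{2B} dz)`. -/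
noncomputable def S1 (a b : ℝ → ℝ) (f : ℝ → ℝ≥0∞) : ℝ → ℝ≥0∞ := fun x =>
  ENNReal.ofReal (∫ z in (0:ℝ)..x, (a z)⁻¹ * Real.exp (-2 * Bfun a b z)) *
    ∫⁻ z in Ioi x, f z * ENNReal.ofReal (Real.exp (2 * Bfun a b z))

/-- `S₂f(x) = ∫₀ˣ f(z) e^{2B(z)} (∫₀^z (1/a) e^{-2B} dt) dz`. -/
noncomputable def S2 (a b : ℝ → ℝ) (f : ℝ → ℝ≥0∞) : ℝ → ℝ≥0∞ := fun x =>
  ∫⁻ z in Ioo (0:ℝ) x,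
    f z * ENNReal.ofReal (Real.exp (2 * Bfun a b z) *
      ∫ t in (0:ℝ)..z, (a t)⁻¹ * Real.exp (-2 * Bfun a b t))

/-- `Ω⁺(b,a) = sup_{x>0} (∫₀ˣ (1/a) e^{-2B}) (∫ₓ^∞ e^{2B}) ∈ [0,∞]`. -/
noncomputable def OmegaPlus (a b : ℝ → ℝ) : ℝ≥0∞ :=
  ⨆ x ∈ Ioi (0:ℝ),
    ENNReal.ofReal (∫ y in (0:ℝ)..x, (a y)⁻¹ * Real.exp (-2 * Bfun a b y)) *
      ∫⁻ y in Ioi x, ENNReal.ofReal (Real.exp (2 * Bfun a b y))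


/-- `Tf = 1 + 2λ(S₁f + S₂f)`. -/
noncomputable def Titer (a b : ℝ → ℝ) (lam : ℝ) (f : ℝ → ℝ≥0∞) : ℝ → ℝ≥0∞ := fun x =>
  1 + 2 * ENNReal.ofReal lam * (S1 a b f x + S2 a b f x)


namespace Stmt18Aux

/-- weight `w = e^{2B}` -/
noncomputable def wf (a b : ℝ → ℝ) (x : ℝ) : ℝ := Real.exp (2 * Bfun a b x)

/-- density `A' = a⁻¹ e^{-2B}` -/
noncomputable def Adf (a b : ℝ → ℝ) (x : ℝ) : ℝ := (a x)⁻¹ * Real.exp (-2 * Bfun a b x)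

/-- `A(x) = ∫₀ˣ A'` -/
noncomputable def Af (a b : ℝ → ℝ) (x : ℝ) : ℝ := ∫ y in (0:ℝ)..x, Adf a b y

/-- `C(x) = ∫ₓ^∞ w` as an extended real -/
noncomputable def cE (a b : ℝ → ℝ) (x : ℝ) : ℝ≥0∞ := ∫⁻ z in Ioi x, ENNReal.ofReal (wf a b z)

noncomputable def cR (a b : ℝ → ℝ) (x : ℝ) : ℝ := (cE a b x).toReal

noncomputable def phi (a b : ℝ → ℝ) (x : ℝ) : ℝ≥0∞ :=
  ENNReal.ofReal ((Real.sqrt (cR a b x))⁻¹)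

variable {a b : ℝ → ℝ}

lemma wf_pos (x : ℝ) : 0 < wf a b x := Real.exp_pos _

section cont
variable (ha : ContDiffOn ℝ 1 a (Ici 0)) (hapos : ∀ x ∈ Ici (0:ℝ), 0 < a x)
  (hb : ContinuousOn b (Ici 0))

/-- continuity of a primitive on `Ici 0` -/
lemma contOn_primitive {f : ℝ → ℝ} (hf : ContinuousOn f (Ici 0)) :
    ContinuousOn (fun x => ∫ t in (0:ℝ)..x, f t) (Ici 0) := by
  intro x hx
  have h1 : ContinuousWithinAt (fun x => ∫ t in (0:ℝ)..x, f t) (Icc 0 (x+1)) x := by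
    apply intervalIntegral.continuousWithinAt_primitive (measure_singleton x)
    have : (0:ℝ) ⊓ 0 = 0 := by simp
    rw [this]
    have : (0:ℝ) ⊔ (x+1) = x + 1 := by
      have : (0:ℝ) ≤ x + 1 := by linarith [hx.out]
      simp [this]
    rw [this]
    exact (hf.mono (by
      intro t ht
      rcases Set.mem_uIcc.1 ht with h | h
      · exact h.1
      · linarith [h.1, hx.out])).intervalIntegrable
  have hsub : Ici (0:ℝ) ∩ Iio (x+1) ⊆ Icc 0 (x+1) := fun t ht => ⟨ht.1, le_of_lt ht.2⟩
  have : ContinuousWithinAt (fun x => ∫ t in (0:ℝ)..x, f t) (Ici 0 ∩ Iio (x+1)) x :=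
    h1.mono hsub
  rw [ContinuousWithinAt, nhdsWithin_inter_of_mem'] at this
  · exact this
  · exact mem_nhdsWithin_of_mem_nhds (Iio_mem_nhds (by linarith))

include ha hapos hb in
lemma cont_B : ContinuousOn (Bfun a b) (Ici 0) := by
  apply contOn_primitive
  exact hb.div ha.continuousOn (fun x hx => (hapos x hx).ne')

include ha hapos hb in
lemma cont_w : ContinuousOn (wf a b) (Ici 0) :=
  (Real.continuous_exp.comp_continuousOn ((continuous_const.continuousOn).mul
    (cont_B ha hapos hb)))

include ha hapos hb in
lemma cont_Adf : ContinuousOn (Adf a b) (Ici 0) := by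
  apply ContinuousOn.mul
  · exact (ha.continuousOn).inv₀ (fun x hx => (hapos x hx).ne')
  · exact Real.continuous_exp.comp_continuousOn ((continuous_const.continuousOn).mul
      (cont_B ha hapos hb))

include ha hapos hb in
lemma cont_Af : ContinuousOn (Af a b) (Ici 0) :=
  contOn_primitive (cont_Adf ha hapos hb)

include ha hapos hb in
lemma Adf_nonneg {x : ℝ} (hx : 0 ≤ x) : 0 ≤ Adf a b x :=
  mul_nonneg (le_of_lt (inv_pos.2 (hapos x hx))) (Real.exp_pos _).le

include ha hapos hb in
lemma Af_nonneg {x : ℝ} (hx : 0 ≤ x) : 0 ≤ Af a b x := by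
  apply intervalIntegral.integral_nonneg hx
  intro y hy
  exact Adf_nonneg ha hapos hb hy.1

end cont


section cfacts
variable (ha : ContDiffOn ℝ 1 a (Ici 0)) (hapos : ∀ x ∈ Ici (0:ℝ), 0 < a x)
  (hb : ContinuousOn b (Ici 0)) (hfin : cE a b 0 < ⊤)

lemma cE_anti : Antitone (cE a b) := fun s t hst =>
  lintegral_mono_set (Ioi_subset_Ioi hst)

include hfin in
lemma cE_ne_top {x : ℝ} (hx : 0 ≤ x) : cE a b x ≠ ⊤ := by
  intro h
  have := cE_anti (a := a) (b := b) hx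
  rw [h] at this
  exact absurd (top_le_iff.1 this) (by intro hh; rw [hh] at hfin; exact lt_irrefl _ hfin)

include ha hapos hb in
lemma lint_Ioc_w {s t : ℝ} (h0 : 0 ≤ s) (hst : s ≤ t) :
    (∫⁻ z in Ioc s t, ENNReal.ofReal (wf a b z)) = ENNReal.ofReal (∫ z in s..t, wf a b z) := by
  rw [intervalIntegral.integral_of_le hst,
    ← MeasureTheory.ofReal_integral_eq_lintegral_ofReal]
  · exact ((cont_w ha hapos hb).mono (fun z hz => le_trans h0 hz.1)).integrableOn_Icc.mono_set
      Ioc_subset_Icc_self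
  · exact Filter.Eventually.of_forall (fun z => (wf_pos z).le)

include ha hapos hb in
lemma cE_split {s t : ℝ} (h0 : 0 ≤ s) (hst : s ≤ t) :
    cE a b s = ENNReal.ofReal (∫ z in s..t, wf a b z) + cE a b t := by
  rw [← lint_Ioc_w ha hapos hb h0 hst]
  rw [cE, ← Set.Ioc_union_Ioi_eq_Ioi hst,
    lintegral_union measurableSet_Ioi (Set.Ioc_disjoint_Ioi le_rfl)]
  rfl

include ha hapos hb hfin in
lemma cR_split {s t : ℝ} (h0 : 0 ≤ s) (hst : s ≤ t) :
    cR a b s = (∫ z in s..t, wf a b z) + cR a b t := by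
  have h1 := cE_split ha hapos hb h0 hst
  have hnt : cE a b t ≠ ⊤ := cE_ne_top hfin (le_trans h0 hst)
  rw [cR, cR, h1, ENNReal.toReal_add (by simp) hnt, ENNReal.toReal_ofReal]
  apply intervalIntegral.integral_nonneg hst (fun z _ => (wf_pos z).le)

include ha hapos hb hfin in
lemma cR_anti {s t : ℝ} (h0 : 0 ≤ s) (hst : s ≤ t) : cR a b t ≤ cR a b s := by
  rw [cR_split ha hapos hb hfin h0 hst]
  have : 0 ≤ ∫ z in s..t, wf a b z :=
    intervalIntegral.integral_nonneg hst (fun z _ => (wf_pos z).le)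
  linarith

include hfin in
lemma cE_eq_ofReal {x : ℝ} (hx : 0 ≤ x) : cE a b x = ENNReal.ofReal (cR a b x) :=
  (ENNReal.ofReal_toReal (cE_ne_top hfin hx)).symm

include ha hapos hb in
lemma cE_pos {x : ℝ} (hx : 0 ≤ x) : 0 < cE a b x := by
  have hcomp : IsCompact (Icc x (x+1)) := isCompact_Icc
  have hsub : Icc x (x+1) ⊆ Ici 0 := fun z hz => le_trans hx hz.1
  obtain ⟨z₀, hz₀, hmin⟩ := hcomp.exists_isMinOn (by
      exact Set.nonempty_Icc.2 (by linarith)) ((cont_w ha hapos hb).mono hsub)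
  set δ := wf a b z₀ with hδ
  have hδpos : 0 < δ := wf_pos z₀
  have : (ENNReal.ofReal δ) * volume (Ioc x (x+1)) ≤ ∫⁻ z in Ioc x (x+1), ENNReal.ofReal (wf a b z) := by
    rw [← MeasureTheory.setLIntegral_const]
    apply setLIntegral_mono' measurableSet_Ioc
    intro z hz
    exact ENNReal.ofReal_le_ofReal (hmin (Ioc_subset_Icc_self hz))
  have h2 : (0:ℝ≥0∞) < (ENNReal.ofReal δ) * volume (Ioc x (x+1)) := by
    apply ENNReal.mul_pos
    · simp [ENNReal.ofReal_pos.2 hδpos, ne_of_gt, hδpos]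
    · simp [Real.volume_Ioc]
  calc (0:ℝ≥0∞) < _ := h2
    _ ≤ ∫⁻ z in Ioc x (x+1), ENNReal.ofReal (wf a b z) := this
    _ ≤ cE a b x := lintegral_mono_set Ioc_subset_Ioi_self

include ha hapos hb hfin in
lemma cR_pos {x : ℝ} (hx : 0 ≤ x) : 0 < cR a b x :=
  ENNReal.toReal_pos (ne_of_gt (cE_pos ha hapos hb hx)) (cE_ne_top hfin hx)

include ha hapos hb hfin in
lemma cR_hasDeriv {x : ℝ} (hx : 0 < x) : HasDerivAt (cR a b) (-(wf a b x)) x := by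
  set p := x/2 with hp
  have hppos : 0 < p := by positivity
  have hpx : p < x := by linarith
  -- cR y = cR p - ∫ p..y wf for y ≥ p
  have key : ∀ y ∈ Ioi p, cR a b y = cR a b p - ∫ z in p..y, wf a b z := by
    intro y hy
    have := cR_split ha hapos hb hfin hppos.le (le_of_lt hy)
    linarith
  have hder : HasDerivAt (fun y => cR a b p - ∫ z in p..y, wf a b z) (-(wf a b x)) x := by
    have h1 : HasDerivAt (fun y => ∫ z in p..y, wf a b z) (wf a b x) x := by
      apply intervalIntegral.integral_hasDerivAt_right
      · exact ((cont_w ha hapos hb).mono (fun z hz => by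
          rcases Set.mem_uIcc.1 hz with h | h
          · exact le_trans hppos.le h.1
          · exact le_trans hx.le h.1)).intervalIntegrable
      · exact (((cont_w ha hapos hb).mono (fun z (hz : z ∈ Ioi (0:ℝ)) => hz.out.le)).stronglyMeasurableAtFilter
          isOpen_Ioi x hx)
      · have : Ici (0:ℝ) ∈ nhds x := Ici_mem_nhds hx
        exact ((cont_w ha hapos hb).continuousAt this)
    simpa using h1.const_sub (cR a b p)
  apply hder.congr_of_eventuallyEq
  filter_upwards [Ioi_mem_nhds hpx] with y hy
  exact key y hy

end cfacts



section suphelpers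

/-- Bound a lintegral over `Ioi x` by bounds over compact pieces `Ioc s t`. -/
lemma lintegral_Ioi_le_of_Ioc {x : ℝ} (hx : 0 ≤ x) {g : ℝ → ℝ≥0∞}
    (hg : AEMeasurable g (volume.restrict (Ioi 0))) {M : ℝ≥0∞}
    (h : ∀ s t : ℝ, x < s → s ≤ t → ∫⁻ z in Ioc s t, g z ≤ M) :
    ∫⁻ z in Ioi x, g z ≤ M := by
  set μ0 := volume.restrict (Ioi (0:ℝ)) with hμ0
  have hlow : ∀ n : ℕ, (0:ℝ) < 1/(n+1) := fun n => by positivity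
  set sn : ℕ → Set ℝ := fun n => Ioc (x + 1/(n+1)) (x + 1 + n) with hsn
  have hmeas : ∀ n, MeasurableSet (sn n) := fun n => measurableSet_Ioc
  have hsub : ∀ n, sn n ⊆ Ioi x := fun n z hz => lt_trans (by linarith [hlow n]) hz.1
  have hsub0 : ∀ n, sn n ⊆ Ioi 0 := fun n z hz => lt_of_le_of_lt hx ((hsub n) hz)
  set fn : ℕ → ℝ → ℝ≥0∞ := fun n => (sn n).indicator g with hfn
  have hmono : Monotone fn := by
    intro m n hmn
    apply Set.indicator_le_indicator_of_subset _ (fun z => zero_le)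
    intro z hz
    have hc : (m:ℝ) ≤ n := by exact_mod_cast hmn
    have h1 : 1/((n:ℝ)+1) ≤ 1/((m:ℝ)+1) := by
      apply one_div_le_one_div_of_le (by positivity)
      linarith
    exact ⟨lt_of_le_of_lt (by linarith) hz.1, le_trans hz.2 (by linarith)⟩
  have hcov : ∀ z ∈ Ioi x, ∃ n, z ∈ sn n := by
    intro z hz
    obtain ⟨n, hn⟩ := exists_nat_gt (max (z - x)⁻¹ (z - x))
    refine ⟨n, ?_, ?_⟩
    · have h1 : (z - x)⁻¹ < (n:ℝ) + 1 := lt_trans (lt_of_le_of_lt (le_max_left _ _) hn) (by linarith)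
      have h2 : 0 < z - x := by simpa using hz
      have h3 : (z-x) * (z-x)⁻¹ < (z-x) * ((n:ℝ)+1) :=
        mul_lt_mul_of_pos_left h1 h2
      rw [mul_inv_cancel₀ (ne_of_gt h2)] at h3
      have : 1/((n:ℝ)+1) < z - x := by
        rw [div_lt_iff₀ (by positivity)]
        linarith [h3]
      linarith
    · have : z - x ≤ n := le_of_lt (lt_of_le_of_lt (le_max_right _ _) hn)
      linarith
  have hisup : ∀ z, (⨆ n, fn n z) = (Ioi x).indicator g z := by
    intro z
    by_cases hz : z ∈ Ioi x
    · apply le_antisymm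
      · exact iSup_le (fun m =>
          (Set.indicator_le_indicator_of_subset (hsub m) (fun _ => zero_le)) z)
      · obtain ⟨n, hn⟩ := hcov z hz
        have h1 : fn n z = g z := Set.indicator_of_mem hn g
        rw [Set.indicator_of_mem hz, ← h1]
        exact le_iSup (fun m => fn m z) n
    · rw [Set.indicator_of_notMem hz]
      apply le_antisymm _ (zero_le)
      apply iSup_le
      intro n
      have : fn n z = 0 := Set.indicator_of_notMem (fun hmem => hz ((hsub n) hmem)) g
      rw [this]
  have heq : ∫⁻ z in Ioi x, g z = ∫⁻ z, (Ioi x).indicator g z ∂μ0 := by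
    rw [lintegral_indicator measurableSet_Ioi, hμ0,
      Measure.restrict_restrict measurableSet_Ioi,
      Set.inter_eq_left.2 (Ioi_subset_Ioi hx)]
  rw [heq]
  have hstep : ∫⁻ z, (Ioi x).indicator g z ∂μ0 = ⨆ n, ∫⁻ z, fn n z ∂μ0 := by
    rw [← lintegral_iSup' (fun n => (hg.indicator (hmeas n)))
      (Filter.Eventually.of_forall (fun z => fun m n hmn => hmono hmn z))]
    exact lintegral_congr (fun z => (hisup z).symm)
  rw [hstep]
  apply iSup_le
  intro n
  have h2 : ∫⁻ z, fn n z ∂μ0 = ∫⁻ z in sn n, g z := by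
    rw [show fn n = (sn n).indicator g from rfl, lintegral_indicator (hmeas n), hμ0,
      Measure.restrict_restrict (hmeas n), Set.inter_eq_left.2 (hsub0 n)]
  rw [h2]
  exact h _ _ (by linarith [hlow n]) (by
    have : 1/(n+1:ℝ) ≤ 1 := by
      rw [div_le_one (by positivity)]; linarith [Nat.cast_nonneg (α := ℝ) n]
    linarith [Nat.cast_nonneg (α := ℝ) n])

/-- Bound a lintegral over `Ioo 0 x` by bounds over pieces `Ioc s x`. -/
lemma lintegral_Ioo_le_of_Ioc {x : ℝ} (hx : 0 < x) {g : ℝ → ℝ≥0∞}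
    (hg : AEMeasurable g (volume.restrict (Ioi 0))) {M : ℝ≥0∞}
    (h : ∀ s : ℝ, 0 < s → s < x → ∫⁻ z in Ioc s x, g z ≤ M) :
    ∫⁻ z in Ioo 0 x, g z ≤ M := by
  set μ0 := volume.restrict (Ioi (0:ℝ)) with hμ0
  set sn : ℕ → Set ℝ := fun n => Ioc (x/(n+2)) x with hsn
  have hmeas : ∀ n, MeasurableSet (sn n) := fun n => measurableSet_Ioc
  have hlow : ∀ n : ℕ, 0 < x/(n+2:ℝ) := fun n => by positivity
  have hlowlt : ∀ n : ℕ, x/(n+2:ℝ) < x := fun n => by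
    rw [div_lt_iff₀ (by positivity)]
    nlinarith [Nat.cast_nonneg (α := ℝ) n]
  have hsub0 : ∀ n, sn n ⊆ Ioi 0 := fun n z hz => lt_trans (hlow n) hz.1
  set fn : ℕ → ℝ → ℝ≥0∞ := fun n => (sn n).indicator g with hfn
  have hmono : Monotone fn := by
    intro m n hmn
    apply Set.indicator_le_indicator_of_subset _ (fun z => zero_le)
    intro z hz
    have hc : (m:ℝ) + 2 ≤ (n:ℝ) + 2 := by
      have : (m:ℝ) ≤ n := by exact_mod_cast hmn
      linarith
    refine ⟨lt_of_le_of_lt ?_ hz.1, hz.2⟩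
    exact div_le_div_of_nonneg_left hx.le (by positivity) hc
  have hcov : ∀ z ∈ Ioo 0 x, ∃ n, z ∈ sn n := by
    intro z hz
    obtain ⟨n, hn⟩ := exists_nat_gt (x / z)
    refine ⟨n, ?_, hz.2.le⟩
    rw [div_lt_iff₀ (by positivity)]
    rw [div_lt_iff₀ hz.1] at hn
    nlinarith [hz.1]
  have hle : ∫⁻ z in Ioo 0 x, g z ≤ ∫⁻ z, (⨆ n, fn n z) ∂μ0 := by
    have heq : ∫⁻ z in Ioo 0 x, g z = ∫⁻ z, (Ioo 0 x).indicator g z ∂μ0 := by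
      rw [lintegral_indicator measurableSet_Ioo, hμ0,
        Measure.restrict_restrict measurableSet_Ioo,
        Set.inter_eq_left.2 Ioo_subset_Ioi_self]
    rw [heq]
    apply lintegral_mono
    intro z
    by_cases hz : z ∈ Ioo 0 x
    · obtain ⟨n, hn⟩ := hcov z hz
      rw [Set.indicator_of_mem hz]
      have h1 : fn n z = g z := Set.indicator_of_mem hn g
      rw [← h1]
      exact le_iSup (fun m => fn m z) n
    · rw [Set.indicator_of_notMem hz]; exact zero_le
  refine le_trans hle ?_
  rw [lintegral_iSup' (fun n => (hg.indicator (hmeas n)))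
    (Filter.Eventually.of_forall (fun z => fun m n hmn => hmono hmn z))]
  apply iSup_le
  intro n
  have h2 : ∫⁻ z, fn n z ∂μ0 = ∫⁻ z in sn n, g z := by
    rw [show fn n = (sn n).indicator g from rfl, lintegral_indicator (hmeas n), hμ0,
      Measure.restrict_restrict (hmeas n), Set.inter_eq_left.2 (hsub0 n)]
  rw [h2]
  exact h _ (hlow n) (hlowlt n)

end suphelpers

section ftc
variable (ha : ContDiffOn ℝ 1 a (Ici 0)) (hapos : ∀ x ∈ Ici (0:ℝ), 0 < a x)
  (hb : ContinuousOn b (Ici 0)) (hfin : cE a b 0 < ⊤)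

lemma meas_cE : Measurable (cE a b) := (cE_anti (a := a) (b := b)).measurable

lemma meas_cR : Measurable (cR a b) := ENNReal.measurable_toReal.comp meas_cE

lemma meas_phi : Measurable (phi a b) :=
  ENNReal.measurable_ofReal.comp ((measurable_inv.comp Real.continuous_sqrt.measurable).comp meas_cR)

include ha hapos hb in
lemma aemeas_w : AEMeasurable (fun z => ENNReal.ofReal (wf a b z)) (volume.restrict (Ioi 0)) :=
  ENNReal.measurable_ofReal.comp_aemeasurable
    (((cont_w ha hapos hb).mono Ioi_subset_Ici_self).aemeasurable measurableSet_Ioi)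

include ha hapos hb in
lemma aemeas_Adf : AEMeasurable (fun z => ENNReal.ofReal (Adf a b z)) (volume.restrict (Ioi 0)) :=
  ENNReal.measurable_ofReal.comp_aemeasurable
    (((cont_Adf ha hapos hb).mono Ioi_subset_Ici_self).aemeasurable measurableSet_Ioi)

include ha hapos hb in
lemma aemeas_Af : AEMeasurable (fun z => ENNReal.ofReal (Af a b z)) (volume.restrict (Ioi 0)) :=
  ENNReal.measurable_ofReal.comp_aemeasurable
    (((cont_Af ha hapos hb).mono Ioi_subset_Ici_self).aemeasurable measurableSet_Ioi)

include ha hapos hb in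
lemma aemeas_wA : AEMeasurable (fun z => ENNReal.ofReal (wf a b z * Af a b z))
    (volume.restrict (Ioi 0)) :=
  ENNReal.measurable_ofReal.comp_aemeasurable
    ((((cont_w ha hapos hb).mul (cont_Af ha hapos hb)).mono Ioi_subset_Ici_self).aemeasurable
      measurableSet_Ioi)

include ha hapos hb hfin in
lemma cont_cR {s t : ℝ} (hs : 0 < s) : ContinuousOn (cR a b) (Icc s t) := by
  intro u hu
  exact ((cR_hasDeriv ha hapos hb hfin (lt_of_lt_of_le hs hu.1)).continuousAt).continuousWithinAt

include ha hapos hb hfin in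
lemma sqrt_cR_ne {u : ℝ} (hu : 0 ≤ u) : Real.sqrt (cR a b u) ≠ 0 :=
  ne_of_gt (Real.sqrt_pos.2 (cR_pos ha hapos hb hfin hu))


include ha hapos hb hfin in
lemma ftc_sqrt {s t : ℝ} (hs : 0 < s) (hst : s ≤ t) :
    ∫⁻ z in Ioc s t, ENNReal.ofReal ((Real.sqrt (cR a b z))⁻¹ * wf a b z)
      = ENNReal.ofReal (2 * Real.sqrt (cR a b s) - 2 * Real.sqrt (cR a b t)) := by
  have hcont : ContinuousOn (fun z => (Real.sqrt (cR a b z))⁻¹ * wf a b z) (Icc s t) := by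
    apply ContinuousOn.mul
    · apply ContinuousOn.inv₀
      · exact Real.continuous_sqrt.comp_continuousOn (cont_cR ha hapos hb hfin hs)
      · exact fun u hu => sqrt_cR_ne ha hapos hb hfin (le_trans hs.le hu.1)
    · exact (cont_w ha hapos hb).mono (fun u hu => le_trans hs.le hu.1)
  have hint : IntervalIntegrable (fun z => (Real.sqrt (cR a b z))⁻¹ * wf a b z) volume s t := by
    rw [intervalIntegrable_iff_integrableOn_Icc_of_le hst]
    exact hcont.integrableOn_Icc
  have hderiv : ∀ u ∈ uIcc s t,
      HasDerivAt (fun y => -2 * Real.sqrt (cR a b y)) ((Real.sqrt (cR a b u))⁻¹ * wf a b u) u := by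
    intro u hu
    rw [uIcc_of_le hst] at hu
    have hu0 : 0 < u := lt_of_lt_of_le hs hu.1
    have hcd := cR_hasDeriv ha hapos hb hfin hu0
    have hsq : HasDerivAt (fun y => Real.sqrt (cR a b y))
        (1 / (2 * Real.sqrt (cR a b u)) * (-(wf a b u))) u :=
      (Real.hasDerivAt_sqrt (ne_of_gt (cR_pos ha hapos hb hfin hu0.le))).comp u hcd
    have := hsq.const_mul (-2 : ℝ)
    refine this.congr_deriv ?_
    have hne : Real.sqrt (cR a b u) ≠ 0 := sqrt_cR_ne ha hapos hb hfin hu0.le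
    field_simp
  have hreal : ∫ z in s..t, (Real.sqrt (cR a b z))⁻¹ * wf a b z
      = (-2 * Real.sqrt (cR a b t)) - (-2 * Real.sqrt (cR a b s)) :=
    intervalIntegral.integral_eq_sub_of_hasDerivAt hderiv hint
  rw [← MeasureTheory.ofReal_integral_eq_lintegral_ofReal
    (by rw [← IntegrableOn, ← intervalIntegrable_iff_integrableOn_Ioc_of_le hst]; exact hint)
    (Filter.Eventually.of_forall ?_)]
  · rw [← intervalIntegral.integral_of_le hst, hreal]
    congr 1
    ring
  · intro z
    by_cases hz : 0 < z
    · exact mul_nonneg (inv_nonneg.2 (Real.sqrt_nonneg _)) (wf_pos z).le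
    · exact mul_nonneg (inv_nonneg.2 (Real.sqrt_nonneg _)) (wf_pos z).le

include ha hapos hb hfin in
lemma ftc_sqrt_inv {s t : ℝ} (hs : 0 < s) (hst : s ≤ t) :
    ∫⁻ z in Ioc s t, ENNReal.ofReal (wf a b z * (cR a b z * Real.sqrt (cR a b z))⁻¹)
      = ENNReal.ofReal (2 * (Real.sqrt (cR a b t))⁻¹ - 2 * (Real.sqrt (cR a b s))⁻¹) := by
  have hcR : ∀ u, s ≤ u → 0 < cR a b u := fun u hu =>
    cR_pos ha hapos hb hfin (le_trans hs.le hu)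
  have hcont : ContinuousOn (fun z => wf a b z * (cR a b z * Real.sqrt (cR a b z))⁻¹) (Icc s t) := by
    apply ContinuousOn.mul
    · exact (cont_w ha hapos hb).mono (fun u hu => le_trans hs.le hu.1)
    · apply ContinuousOn.inv₀
      · exact (cont_cR ha hapos hb hfin hs).mul
          (Real.continuous_sqrt.comp_continuousOn (cont_cR ha hapos hb hfin hs))
      · intro u hu
        exact ne_of_gt (mul_pos (hcR u hu.1) (Real.sqrt_pos.2 (hcR u hu.1)))
  have hint : IntervalIntegrable (fun z => wf a b z * (cR a b z * Real.sqrt (cR a b z))⁻¹) volume s t := by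
    rw [intervalIntegrable_iff_integrableOn_Icc_of_le hst]
    exact hcont.integrableOn_Icc
  have hderiv : ∀ u ∈ uIcc s t,
      HasDerivAt (fun y => 2 * (Real.sqrt (cR a b y))⁻¹)
        (wf a b u * (cR a b u * Real.sqrt (cR a b u))⁻¹) u := by
    intro u hu
    rw [uIcc_of_le hst] at hu
    have hu0 : 0 < u := lt_of_lt_of_le hs hu.1
    have hcpos : 0 < cR a b u := hcR u hu.1
    have hcd := cR_hasDeriv ha hapos hb hfin hu0
    have hsq : HasDerivAt (fun y => Real.sqrt (cR a b y))
        (1 / (2 * Real.sqrt (cR a b u)) * (-(wf a b u))) u :=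
      (Real.hasDerivAt_sqrt (ne_of_gt hcpos)).comp u hcd
    have hne : Real.sqrt (cR a b u) ≠ 0 := sqrt_cR_ne ha hapos hb hfin hu0.le
    have hinv := (hsq.inv hne).const_mul (2:ℝ)
    refine hinv.congr_deriv ?_
    have hsq2 : Real.sqrt (cR a b u) * Real.sqrt (cR a b u) = cR a b u :=
      Real.mul_self_sqrt hcpos.le
    field_simp
    nlinarith [hsq2, Real.sqrt_nonneg (cR a b u), wf_pos (a:=a) (b:=b) u]
  have hreal : ∫ z in s..t, wf a b z * (cR a b z * Real.sqrt (cR a b z))⁻¹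
      = (2 * (Real.sqrt (cR a b t))⁻¹) - (2 * (Real.sqrt (cR a b s))⁻¹) :=
    intervalIntegral.integral_eq_sub_of_hasDerivAt hderiv hint
  rw [← MeasureTheory.ofReal_integral_eq_lintegral_ofReal
    (by rw [← IntegrableOn, ← intervalIntegrable_iff_integrableOn_Ioc_of_le hst]; exact hint)
    (Filter.Eventually.of_forall (fun z =>
      mul_nonneg (wf_pos z).le (inv_nonneg.2 (mul_nonneg
        (by
          by_cases h : 0 ≤ cR a b z
          · exact h
          · exact absurd (ENNReal.toReal_nonneg) h) (Real.sqrt_nonneg _)))))]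
  rw [← intervalIntegral.integral_of_le hst, hreal]

include ha hapos hb hfin in
lemma ftc_log {s t : ℝ} (hs : 0 < s) (hst : s ≤ t) :
    ∫⁻ z in Ioc s t, ENNReal.ofReal (wf a b z * (cR a b z)⁻¹)
      = ENNReal.ofReal (Real.log (cR a b s) - Real.log (cR a b t)) := by
  have hcR : ∀ u, s ≤ u → 0 < cR a b u := fun u hu =>
    cR_pos ha hapos hb hfin (le_trans hs.le hu)
  have hcont : ContinuousOn (fun z => wf a b z * (cR a b z)⁻¹) (Icc s t) := by
    apply ContinuousOn.mul
    · exact (cont_w ha hapos hb).mono (fun u hu => le_trans hs.le hu.1)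
    · exact (cont_cR ha hapos hb hfin hs).inv₀ (fun u hu => ne_of_gt (hcR u hu.1))
  have hint : IntervalIntegrable (fun z => wf a b z * (cR a b z)⁻¹) volume s t := by
    rw [intervalIntegrable_iff_integrableOn_Icc_of_le hst]
    exact hcont.integrableOn_Icc
  have hderiv : ∀ u ∈ uIcc s t,
      HasDerivAt (fun y => -Real.log (cR a b y)) (wf a b u * (cR a b u)⁻¹) u := by
    intro u hu
    rw [uIcc_of_le hst] at hu
    have hu0 : 0 < u := lt_of_lt_of_le hs hu.1
    have hcpos : 0 < cR a b u := hcR u hu.1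
    have hcd := cR_hasDeriv ha hapos hb hfin hu0
    have hlog : HasDerivAt (fun y => Real.log (cR a b y))
        ((cR a b u)⁻¹ * (-(wf a b u))) u :=
      (Real.hasDerivAt_log (ne_of_gt hcpos)).comp u hcd
    have := hlog.neg
    refine this.congr_deriv ?_
    ring
  have hreal : ∫ z in s..t, wf a b z * (cR a b z)⁻¹
      = (-Real.log (cR a b t)) - (-Real.log (cR a b s)) :=
    intervalIntegral.integral_eq_sub_of_hasDerivAt hderiv hint
  rw [← MeasureTheory.ofReal_integral_eq_lintegral_ofReal
    (f := fun z => wf a b z * (cR a b z)⁻¹)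
    (by rw [← IntegrableOn, ← intervalIntegrable_iff_integrableOn_Ioc_of_le hst]; exact hint)
    (Filter.Eventually.of_forall (fun z =>
      mul_nonneg (wf_pos z).le (inv_nonneg.2 ENNReal.toReal_nonneg)))]
  rw [← intervalIntegral.integral_of_le hst, hreal]
  congr 1
  ring

end ftc

lemma one_add_log_le_two_sqrt {t : ℝ} (ht : 0 < t) : 1 + Real.log t ≤ 2 * Real.sqrt t := by
  have h1 : Real.log (Real.sqrt t) ≤ Real.sqrt t - 1 :=
    Real.log_le_sub_one_of_pos (Real.sqrt_pos.2 ht)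
  have h2 : Real.log (Real.sqrt t) = Real.log t / 2 := Real.log_sqrt ht.le
  linarith

section opbounds
variable (ha : ContDiffOn ℝ 1 a (Ici 0)) (hapos : ∀ x ∈ Ici (0:ℝ), 0 < a x)
  (hb : ContinuousOn b (Ici 0)) (hfin : cE a b 0 < ⊤)
  {Ωr : ℝ} (hΩr : 0 ≤ Ωr) (hAC : ∀ z, 0 < z → Af a b z * cR a b z ≤ Ωr)

include ha hapos hb hfin in
lemma L1 {x : ℝ} (hx : 0 ≤ x) :
    ∫⁻ z in Ioi x, phi a b z * ENNReal.ofReal (wf a b z)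
      ≤ ENNReal.ofReal (2 * Real.sqrt (cR a b x)) := by
  have hpt : ∀ z, phi a b z * ENNReal.ofReal (wf a b z)
      = ENNReal.ofReal ((Real.sqrt (cR a b z))⁻¹ * wf a b z) := fun z =>
    (ENNReal.ofReal_mul (inv_nonneg.2 (Real.sqrt_nonneg _))).symm
  rw [lintegral_congr hpt]
  apply lintegral_Ioi_le_of_Ioc hx
  · exact ENNReal.measurable_ofReal.comp_aemeasurable
      ((((measurable_inv.comp Real.continuous_sqrt.measurable).comp (meas_cR (a:=a) (b:=b))).aemeasurable).mul
        (((cont_w ha hapos hb).mono Ioi_subset_Ici_self).aemeasurable measurableSet_Ioi))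
  · intro s t hs hst
    rw [ftc_sqrt ha hapos hb hfin (lt_of_le_of_lt hx hs) hst]
    apply ENNReal.ofReal_le_ofReal
    have h1 : cR a b s ≤ cR a b x := cR_anti ha hapos hb hfin hx hs.le
    have h2 : Real.sqrt (cR a b s) ≤ Real.sqrt (cR a b x) := Real.sqrt_le_sqrt h1
    have h3 : 0 ≤ Real.sqrt (cR a b t) := Real.sqrt_nonneg _
    linarith

include ha hapos hb hfin hΩr hAC in
lemma L2 {x : ℝ} (hx : 0 < x) :
    ∫⁻ z in Ioo 0 x, phi a b z * ENNReal.ofReal (wf a b z * Af a b z)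
      ≤ ENNReal.ofReal (Ωr * (2 * (Real.sqrt (cR a b x))⁻¹)) := by
  have hstep : ∫⁻ z in Ioo 0 x, phi a b z * ENNReal.ofReal (wf a b z * Af a b z)
      ≤ ∫⁻ z in Ioo 0 x, ENNReal.ofReal Ωr *
          ENNReal.ofReal (wf a b z * (cR a b z * Real.sqrt (cR a b z))⁻¹) := by
    apply setLIntegral_mono' measurableSet_Ioo
    intro z hz
    have hz0 : 0 < z := hz.1
    have hc : 0 < cR a b z := cR_pos ha hapos hb hfin hz0.le
    have hsq : 0 < Real.sqrt (cR a b z) := Real.sqrt_pos.2 hc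
    rw [phi, ← ENNReal.ofReal_mul (inv_nonneg.2 hsq.le), ← ENNReal.ofReal_mul hΩr]
    apply ENNReal.ofReal_le_ofReal
    have hA := hAC z hz0
    have hw := (wf_pos (a:=a) (b:=b) z).le
    have hAnn : 0 ≤ Af a b z := Af_nonneg ha hapos hb hz0.le
    have key : (Real.sqrt (cR a b z))⁻¹ * (wf a b z * Af a b z)
        = (wf a b z * (Af a b z * cR a b z)) * (cR a b z * Real.sqrt (cR a b z))⁻¹ := by
      field_simp
    rw [key]
    have key2 : Ωr * (wf a b z * (cR a b z * Real.sqrt (cR a b z))⁻¹)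
        = (wf a b z * Ωr) * (cR a b z * Real.sqrt (cR a b z))⁻¹ := by ring
    rw [key2]
    apply mul_le_mul_of_nonneg_right _ (inv_nonneg.2 (mul_nonneg hc.le hsq.le))
    exact mul_le_mul_of_nonneg_left hA hw
  refine le_trans hstep ?_
  rw [lintegral_const_mul' _ _ ENNReal.ofReal_ne_top]
  rw [ENNReal.ofReal_mul hΩr]
  apply mul_le_mul_of_nonneg_left _ (zero_le)
  apply lintegral_Ioo_le_of_Ioc hx
  · exact ENNReal.measurable_ofReal.comp_aemeasurable
      ((((cont_w ha hapos hb).mono Ioi_subset_Ici_self).aemeasurable measurableSet_Ioi).mul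
        ((measurable_inv.comp ((meas_cR (a:=a) (b:=b)).mul
          (Real.continuous_sqrt.measurable.comp (meas_cR (a:=a) (b:=b))))).aemeasurable))
  · intro s hs hsx
    rw [ftc_sqrt_inv ha hapos hb hfin hs hsx.le]
    apply ENNReal.ofReal_le_ofReal
    have : 0 ≤ 2 * (Real.sqrt (cR a b s))⁻¹ :=
      mul_nonneg (by norm_num) (inv_nonneg.2 (Real.sqrt_nonneg _))
    linarith

include ha hapos hb hfin hΩr hAC in
lemma L3 {x : ℝ} (hx : 0 < x) :
    ∫⁻ z in Ioo 0 x, ENNReal.ofReal (wf a b z * Af a b z)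
      ≤ ENNReal.ofReal (Ωr * (Real.log (cR a b 0) - Real.log (cR a b x))) := by
  have hstep : ∫⁻ z in Ioo 0 x, ENNReal.ofReal (wf a b z * Af a b z)
      ≤ ∫⁻ z in Ioo 0 x, ENNReal.ofReal Ωr * ENNReal.ofReal (wf a b z * (cR a b z)⁻¹) := by
    apply setLIntegral_mono' measurableSet_Ioo
    intro z hz
    have hz0 : 0 < z := hz.1
    have hc : 0 < cR a b z := cR_pos ha hapos hb hfin hz0.le
    rw [← ENNReal.ofReal_mul hΩr]
    apply ENNReal.ofReal_le_ofReal
    have hA := hAC z hz0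
    have hw := (wf_pos (a:=a) (b:=b) z).le
    have key : wf a b z * Af a b z = (wf a b z * (Af a b z * cR a b z)) * (cR a b z)⁻¹ := by
      field_simp
    rw [key, show Ωr * (wf a b z * (cR a b z)⁻¹) = (wf a b z * Ωr) * (cR a b z)⁻¹ by ring]
    exact mul_le_mul_of_nonneg_right (mul_le_mul_of_nonneg_left hA hw) (inv_nonneg.2 hc.le)
  refine le_trans hstep ?_
  rw [lintegral_const_mul' _ _ ENNReal.ofReal_ne_top, ENNReal.ofReal_mul hΩr]
  apply mul_le_mul_of_nonneg_left _ (zero_le)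
  apply lintegral_Ioo_le_of_Ioc hx
  · exact ENNReal.measurable_ofReal.comp_aemeasurable
      ((((cont_w ha hapos hb).mono Ioi_subset_Ici_self).aemeasurable measurableSet_Ioi).mul
        ((measurable_inv.comp (meas_cR (a:=a) (b:=b))).aemeasurable))
  · intro s hs hsx
    rw [ftc_log ha hapos hb hfin hs hsx.le]
    apply ENNReal.ofReal_le_ofReal
    have h1 : cR a b s ≤ cR a b 0 := cR_anti ha hapos hb hfin le_rfl hs.le
    have h2 : Real.log (cR a b s) ≤ Real.log (cR a b 0) :=
      Real.log_le_log (cR_pos ha hapos hb hfin hs.le) h1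
    linarith

end opbounds

section sop
variable (ha : ContDiffOn ℝ 1 a (Ici 0)) (hapos : ∀ x ∈ Ici (0:ℝ), 0 < a x)
  (hb : ContinuousOn b (Ici 0)) (hfin : cE a b 0 < ⊤)
  {Ωr : ℝ} (hΩr : 0 ≤ Ωr) (hAC : ∀ z, 0 < z → Af a b z * cR a b z ≤ Ωr)

lemma S1_eq (f : ℝ → ℝ≥0∞) (x : ℝ) :
    S1 a b f x = ENNReal.ofReal (Af a b x) * ∫⁻ z in Ioi x, f z * ENNReal.ofReal (wf a b z) := rfl

lemma S2_eq (f : ℝ → ℝ≥0∞) (x : ℝ) :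
    S2 a b f x = ∫⁻ z in Ioo 0 x, f z * ENNReal.ofReal (wf a b z * Af a b z) := rfl

include ha hapos hb hfin hΩr hAC in
lemma S1phi_le {x : ℝ} (hx : 0 < x) :
    S1 a b (phi a b) x ≤ ENNReal.ofReal (2*Ωr) * phi a b x := by
  rw [S1_eq]
  calc ENNReal.ofReal (Af a b x) * ∫⁻ z in Ioi x, phi a b z * ENNReal.ofReal (wf a b z)
      ≤ ENNReal.ofReal (Af a b x) * ENNReal.ofReal (2 * Real.sqrt (cR a b x)) :=
        mul_le_mul_right (L1 ha hapos hb hfin hx.le) _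
    _ = ENNReal.ofReal (Af a b x * (2 * Real.sqrt (cR a b x))) :=
        (ENNReal.ofReal_mul (Af_nonneg ha hapos hb hx.le)).symm
    _ ≤ ENNReal.ofReal (2*Ωr * (Real.sqrt (cR a b x))⁻¹) := by
        apply ENNReal.ofReal_le_ofReal
        have hc : 0 < cR a b x := cR_pos ha hapos hb hfin hx.le
        have hsq : 0 < Real.sqrt (cR a b x) := Real.sqrt_pos.2 hc
        have hself : Real.sqrt (cR a b x) * Real.sqrt (cR a b x) = cR a b x :=
          Real.mul_self_sqrt hc.le
        have hA := hAC x hx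
        have h5 : Af a b x * (2 * Real.sqrt (cR a b x))
            = 2 * (Af a b x * cR a b x) * (Real.sqrt (cR a b x))⁻¹ := by
          field_simp
          linear_combination Af a b x * hself
        rw [h5]
        exact mul_le_mul_of_nonneg_right
          (mul_le_mul_of_nonneg_left hA (by norm_num : (0:ℝ) ≤ 2))
          (inv_nonneg.2 hsq.le)
    _ = ENNReal.ofReal (2*Ωr) * phi a b x := by
        rw [phi, ← ENNReal.ofReal_mul (by positivity)]

include ha hapos hb hfin hΩr hAC in
lemma S2phi_le {x : ℝ} (hx : 0 < x) :
    S2 a b (phi a b) x ≤ ENNReal.ofReal (2*Ωr) * phi a b x := by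
  rw [S2_eq]
  refine le_trans (L2 ha hapos hb hfin hΩr hAC hx) ?_
  rw [phi, ← ENNReal.ofReal_mul (by positivity)]
  apply ENNReal.ofReal_le_ofReal
  rw [show Ωr * (2 * (Real.sqrt (cR a b x))⁻¹) = 2*Ωr * (Real.sqrt (cR a b x))⁻¹ by ring]

include ha hapos hb hfin hΩr hAC in
lemma Sone_le {x : ℝ} (hx : 0 < x) :
    S1 a b (fun _ => 1) x + S2 a b (fun _ => 1) x
      ≤ ENNReal.ofReal (2 * Ωr * Real.sqrt (cR a b 0)) * phi a b x := by
  have hc0 : 0 < cR a b 0 := cR_pos ha hapos hb hfin le_rfl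
  have hcx : 0 < cR a b x := cR_pos ha hapos hb hfin hx.le
  have hS1 : S1 a b (fun _ => 1) x ≤ ENNReal.ofReal Ωr := by
    rw [S1_eq]
    have : (∫⁻ z in Ioi x, (fun (_:ℝ) => (1:ℝ≥0∞)) z * ENNReal.ofReal (wf a b z)) = cE a b x :=
      lintegral_congr (fun z => one_mul _)
    rw [this, cE_eq_ofReal hfin hx.le,
      ← ENNReal.ofReal_mul (Af_nonneg ha hapos hb hx.le)]
    exact ENNReal.ofReal_le_ofReal (hAC x hx)
  have hS2 : S2 a b (fun _ => 1) x
      ≤ ENNReal.ofReal (Ωr * (Real.log (cR a b 0) - Real.log (cR a b x))) := by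
    rw [S2_eq]
    have : (∫⁻ z in Ioo 0 x, (fun (_:ℝ) => (1:ℝ≥0∞)) z * ENNReal.ofReal (wf a b z * Af a b z))
        = ∫⁻ z in Ioo 0 x, ENNReal.ofReal (wf a b z * Af a b z) :=
      lintegral_congr (fun z => one_mul _)
    rw [this]
    exact L3 ha hapos hb hfin hΩr hAC hx
  have hlogle : Real.log (cR a b x) ≤ Real.log (cR a b 0) :=
    Real.log_le_log hcx (cR_anti ha hapos hb hfin le_rfl hx.le)
  calc S1 a b (fun _ => 1) x + S2 a b (fun _ => 1) x
      ≤ ENNReal.ofReal Ωr + ENNReal.ofReal (Ωr * (Real.log (cR a b 0) - Real.log (cR a b x))) :=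
        add_le_add hS1 hS2
    _ = ENNReal.ofReal (Ωr + Ωr * (Real.log (cR a b 0) - Real.log (cR a b x))) :=
        (ENNReal.ofReal_add hΩr (mul_nonneg hΩr (by linarith))).symm
    _ ≤ ENNReal.ofReal (2 * Ωr * Real.sqrt (cR a b 0) * (Real.sqrt (cR a b x))⁻¹) := by
        apply ENNReal.ofReal_le_ofReal
        set t := cR a b 0 / cR a b x with hts
        have htpos : 0 < t := div_pos hc0 hcx
        have hlog : Real.log t = Real.log (cR a b 0) - Real.log (cR a b x) :=
          Real.log_div (ne_of_gt hc0) (ne_of_gt hcx)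
        have hkey := one_add_log_le_two_sqrt htpos
        have hsqrt : Real.sqrt t = Real.sqrt (cR a b 0) * (Real.sqrt (cR a b x))⁻¹ := by
          rw [hts, Real.sqrt_div hc0.le, div_eq_mul_inv]
        have h6 : Ωr * (1 + Real.log t) ≤ Ωr * (2 * Real.sqrt t) :=
          mul_le_mul_of_nonneg_left hkey hΩr
        calc Ωr + Ωr * (Real.log (cR a b 0) - Real.log (cR a b x))
            = Ωr * (1 + Real.log t) := by rw [hlog]; ring
          _ ≤ Ωr * (2 * Real.sqrt t) := h6
          _ = 2 * Ωr * Real.sqrt (cR a b 0) * (Real.sqrt (cR a b x))⁻¹ := by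
              rw [hsqrt]; ring
    _ = ENNReal.ofReal (2 * Ωr * Real.sqrt (cR a b 0)) * phi a b x := by
        rw [phi, ← ENNReal.ofReal_mul (by positivity)]

include ha hapos hb hfin hΩr hAC in
lemma Sphi_le {x : ℝ} (hx : 0 < x) :
    S1 a b (phi a b) x + S2 a b (phi a b) x ≤ ENNReal.ofReal (4*Ωr) * phi a b x := by
  calc S1 a b (phi a b) x + S2 a b (phi a b) x
      ≤ ENNReal.ofReal (2*Ωr) * phi a b x + ENNReal.ofReal (2*Ωr) * phi a b x :=
        add_le_add (S1phi_le ha hapos hb hfin hΩr hAC hx) (S2phi_le ha hapos hb hfin hΩr hAC hx)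
    _ = (ENNReal.ofReal (2*Ωr) + ENNReal.ofReal (2*Ωr)) * phi a b x := (add_mul _ _ _).symm
    _ = ENNReal.ofReal (4*Ωr) * phi a b x := by
        rw [← ENNReal.ofReal_add (by positivity) (by positivity)]
        rw [show (2:ℝ)*Ωr+2*Ωr = 4*Ωr by ring]

include hfin in
lemma wNorm_one : wNorm a b (fun _ => 1) = ENNReal.ofReal (cR a b 0) := by
  rw [wNorm]
  have : (∫⁻ x in Ioi (0:ℝ), (fun (_:ℝ) => (1:ℝ≥0∞)) x * ENNReal.ofReal (Real.exp (2 * Bfun a b x)))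
      = cE a b 0 := lintegral_congr (fun z => one_mul _)
  rw [this, cE_eq_ofReal hfin le_rfl]

end sop

/-- the recursive bound coefficients -/
noncomputable def bseq (lam Ωr s0 : ℝ) : ℕ → ℝ
  | 0 => 0
  | n+1 => lam * (4*Ωr*s0 + 8*Ωr * bseq lam Ωr s0 n)

lemma bseq_nonneg {lam Ωr s0 : ℝ} (hl : 0 ≤ lam) (ho : 0 ≤ Ωr) (hs : 0 ≤ s0) :
    ∀ n, 0 ≤ bseq lam Ωr s0 n
  | 0 => le_refl 0
  | (n+1) => by
      have := bseq_nonneg hl ho hs n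
      have : 0 ≤ 4*Ωr*s0 + 8*Ωr * bseq lam Ωr s0 n := by positivity
      exact mul_nonneg hl this

lemma sum_Icc_geom (r : ℝ) (n : ℕ) :
    ∑ k ∈ Finset.Icc 1 (n+1), r^k = r * (1 + ∑ k ∈ Finset.Icc 1 n, r^k) := by
  have h : ∀ m : ℕ, ∑ k ∈ Finset.Icc 1 m, r^k = r * ∑ i ∈ Finset.range m, r^i := by
    intro m
    rw [show Finset.Icc 1 m = Finset.Ico 1 (m+1) from by rw [Finset.Ico_add_one_right_eq_Icc],
      Finset.sum_Ico_eq_sum_range]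
    simp only [Nat.add_sub_cancel, pow_add, pow_one, ← Finset.mul_sum]
  rw [h (n+1), h n, Finset.sum_range_succ', pow_zero]
  simp only [pow_succ', ← Finset.mul_sum]
  ring

lemma bseq_sum {lam Ωr s0 : ℝ} (n : ℕ) :
    bseq lam Ωr s0 n * (2*s0) = (∑ k ∈ Finset.Icc 1 n, (8*lam*Ωr)^k) * (s0*s0) := by
  induction n with
  | zero => simp [bseq]
  | succ n ih =>
    rw [show bseq lam Ωr s0 (n+1) = lam * (4*Ωr*s0 + 8*Ωr * bseq lam Ωr s0 n) from rfl,
      sum_Icc_geom]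
    linear_combination (8*lam*Ωr) * ih

section iter
variable (ha : ContDiffOn ℝ 1 a (Ici 0)) (hapos : ∀ x ∈ Ici (0:ℝ), 0 < a x)
  (hb : ContinuousOn b (Ici 0)) (hfin : cE a b 0 < ⊤)
  {Ωr : ℝ} (hΩr : 0 ≤ Ωr) (hAC : ∀ z, 0 < z → Af a b z * cR a b z ≤ Ωr)
  {lam : ℝ} (hlam : 0 < lam)

lemma S1_mono {f g : ℝ → ℝ≥0∞} (h : ∀ z ∈ Ioi (0:ℝ), f z ≤ g z) {x : ℝ} (hx : 0 < x) :
    S1 a b f x ≤ S1 a b g x := by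
  rw [S1_eq, S1_eq]
  apply mul_le_mul_right
  apply lintegral_mono_ae
  rw [ae_restrict_iff' measurableSet_Ioi]
  exact Filter.Eventually.of_forall (fun z hz =>
    mul_le_mul_left (h z (lt_trans hx hz)) _)

lemma S2_mono {f g : ℝ → ℝ≥0∞} (h : ∀ z ∈ Ioi (0:ℝ), f z ≤ g z) {x : ℝ} (hx : 0 < x) :
    S2 a b f x ≤ S2 a b g x := by
  rw [S2_eq, S2_eq]
  apply lintegral_mono_ae
  rw [ae_restrict_iff' measurableSet_Ioo]
  exact Filter.Eventually.of_forall (fun z hz =>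
    mul_le_mul_left (h z hz.1) _)

lemma Titer_mono {f g : ℝ → ℝ≥0∞} (h : ∀ z ∈ Ioi (0:ℝ), f z ≤ g z) {x : ℝ} (hx : 0 < x) :
    Titer a b lam f x ≤ Titer a b lam g x := by
  apply add_le_add_right
  apply mul_le_mul_right
  exact add_le_add (S1_mono h hx) (S2_mono h hx)

include ha hapos hb in
lemma S1_split {β : ℝ≥0∞} (hβ : β ≠ ⊤) {x : ℝ} (hx : 0 < x) :
    S1 a b (fun z => 1 + β * phi a b z) x
      = S1 a b (fun _ => 1) x + β * S1 a b (phi a b) x := by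
  rw [S1_eq, S1_eq, S1_eq]
  have h1 : ∀ z, ((1:ℝ≥0∞) + β * phi a b z) * ENNReal.ofReal (wf a b z)
      = ENNReal.ofReal (wf a b z) + β * (phi a b z * ENNReal.ofReal (wf a b z)) := by
    intro z; ring
  rw [lintegral_congr h1]
  have haem : AEMeasurable (fun z => ENNReal.ofReal (wf a b z)) (volume.restrict (Ioi x)) :=
    (aemeas_w ha hapos hb).mono_measure (Measure.restrict_mono (Ioi_subset_Ioi hx.le) le_rfl)
  rw [lintegral_add_left' haem, lintegral_const_mul' β _ hβ]
  have h2 : (∫⁻ z in Ioi x, (fun (_:ℝ) => (1:ℝ≥0∞)) z * ENNReal.ofReal (wf a b z))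
      = ∫⁻ z in Ioi x, ENNReal.ofReal (wf a b z) := lintegral_congr (fun z => one_mul _)
  rw [h2]
  ring

include ha hapos hb in
lemma S2_split {β : ℝ≥0∞} (hβ : β ≠ ⊤) {x : ℝ} (hx : 0 < x) :
    S2 a b (fun z => 1 + β * phi a b z) x
      = S2 a b (fun _ => 1) x + β * S2 a b (phi a b) x := by
  rw [S2_eq, S2_eq, S2_eq]
  have h1 : ∀ z, ((1:ℝ≥0∞) + β * phi a b z) * ENNReal.ofReal (wf a b z * Af a b z)
      = ENNReal.ofReal (wf a b z * Af a b z)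
        + β * (phi a b z * ENNReal.ofReal (wf a b z * Af a b z)) := by
    intro z; ring
  rw [lintegral_congr h1]
  have haem : AEMeasurable (fun z => ENNReal.ofReal (wf a b z * Af a b z))
      (volume.restrict (Ioo 0 x)) :=
    (aemeas_wA ha hapos hb).mono_measure (Measure.restrict_mono Ioo_subset_Ioi_self le_rfl)
  rw [lintegral_add_left' haem, lintegral_const_mul' β _ hβ]
  have h2 : (∫⁻ z in Ioo 0 x, (fun (_:ℝ) => (1:ℝ≥0∞)) z * ENNReal.ofReal (wf a b z * Af a b z))
      = ∫⁻ z in Ioo 0 x, ENNReal.ofReal (wf a b z * Af a b z) :=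
    lintegral_congr (fun z => one_mul _)
  rw [h2]

include ha hapos hb hfin hΩr hAC hlam in
lemma Titer_pres {β : ℝ} (hβ : 0 ≤ β) {x : ℝ} (hx : 0 < x) :
    Titer a b lam (fun z => 1 + ENNReal.ofReal β * phi a b z) x
      ≤ 1 + ENNReal.ofReal (lam * (4*Ωr*Real.sqrt (cR a b 0) + 8*Ωr*β)) * phi a b x := by
  set s0 := Real.sqrt (cR a b 0) with hs0
  have hs0nn : 0 ≤ s0 := Real.sqrt_nonneg _
  rw [Titer, S1_split ha hapos hb ENNReal.ofReal_ne_top hx,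
    S2_split ha hapos hb ENNReal.ofReal_ne_top hx]
  apply add_le_add_right
  have hsum : S1 a b (fun _ => 1) x + ENNReal.ofReal β * S1 a b (phi a b) x
      + (S2 a b (fun _ => 1) x + ENNReal.ofReal β * S2 a b (phi a b) x)
      = (S1 a b (fun _ => 1) x + S2 a b (fun _ => 1) x)
        + ENNReal.ofReal β * (S1 a b (phi a b) x + S2 a b (phi a b) x) := by ring
  rw [hsum]
  have h1 := Sone_le ha hapos hb hfin hΩr hAC hx
  have h2 := Sphi_le ha hapos hb hfin hΩr hAC hx
  calc 2 * ENNReal.ofReal lam * ((S1 a b (fun _ => 1) x + S2 a b (fun _ => 1) x)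
        + ENNReal.ofReal β * (S1 a b (phi a b) x + S2 a b (phi a b) x))
      ≤ 2 * ENNReal.ofReal lam * (ENNReal.ofReal (2 * Ωr * s0) * phi a b x
        + ENNReal.ofReal β * (ENNReal.ofReal (4*Ωr) * phi a b x)) := by
        apply mul_le_mul_right
        exact add_le_add h1 (mul_le_mul_right h2 _)
    _ = ENNReal.ofReal (lam * (4*Ωr*s0 + 8*Ωr*β)) * phi a b x := by
        rw [← mul_assoc (ENNReal.ofReal β), ← ENNReal.ofReal_mul hβ]
        rw [← add_mul, ← ENNReal.ofReal_add (by positivity) (by positivity)]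
        rw [← mul_assoc, ← mul_assoc]
        congr 1
        rw [show (2:ℝ≥0∞) = ENNReal.ofReal 2 by norm_num,
          ← ENNReal.ofReal_mul (by norm_num), ← ENNReal.ofReal_mul (by positivity)]
        congr 1
        ring

include ha hapos hb hfin hΩr hAC hlam in
lemma iter_le (n : ℕ) : ∀ x ∈ Ioi (0:ℝ),
    (Titer a b lam)^[n] (fun _ => 1) x
      ≤ 1 + ENNReal.ofReal (bseq lam Ωr (Real.sqrt (cR a b 0)) n) * phi a b x := by
  induction n with
  | zero => intro x _; exact le_self_add
  | succ n ih =>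
    intro x hx
    rw [Function.iterate_succ_apply']
    calc Titer a b lam ((Titer a b lam)^[n] fun _ => 1) x
        ≤ Titer a b lam (fun z => 1 + ENNReal.ofReal (bseq lam Ωr (Real.sqrt (cR a b 0)) n)
            * phi a b z) x := Titer_mono ih hx
      _ ≤ 1 + ENNReal.ofReal (lam * (4*Ωr*Real.sqrt (cR a b 0)
            + 8*Ωr*bseq lam Ωr (Real.sqrt (cR a b 0)) n)) * phi a b x :=
          Titer_pres ha hapos hb hfin hΩr hAC hlam
            (bseq_nonneg hlam.le hΩr (Real.sqrt_nonneg _) n) hx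
      _ = 1 + ENNReal.ofReal (bseq lam Ωr (Real.sqrt (cR a b 0)) (n+1)) * phi a b x := rfl

include ha hapos hb hfin hΩr hAC hlam in
lemma wNorm_iter_le (n : ℕ) :
    wNorm a b ((Titer a b lam)^[n] fun _ => 1)
      ≤ ENNReal.ofReal (cR a b 0
          + bseq lam Ωr (Real.sqrt (cR a b 0)) n * (2 * Real.sqrt (cR a b 0))) := by
  set β := bseq lam Ωr (Real.sqrt (cR a b 0)) n with hβdef
  have hβnn : 0 ≤ β := bseq_nonneg hlam.le hΩr (Real.sqrt_nonneg _) n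
  have hstep : wNorm a b ((Titer a b lam)^[n] fun _ => 1)
      ≤ ∫⁻ x in Ioi (0:ℝ), (1 + ENNReal.ofReal β * phi a b x) * ENNReal.ofReal (wf a b x) := by
    apply lintegral_mono_ae
    rw [ae_restrict_iff' measurableSet_Ioi]
    exact Filter.Eventually.of_forall (fun x hx =>
      mul_le_mul_left (iter_le ha hapos hb hfin hΩr hAC hlam n x hx) _)
  refine le_trans hstep ?_
  have h1 : ∀ x, ((1:ℝ≥0∞) + ENNReal.ofReal β * phi a b x) * ENNReal.ofReal (wf a b x)
      = ENNReal.ofReal (wf a b x) + ENNReal.ofReal β * (phi a b x * ENNReal.ofReal (wf a b x)) := by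
    intro x; ring
  rw [lintegral_congr h1, lintegral_add_left' (aemeas_w ha hapos hb),
    lintegral_const_mul' _ _ ENNReal.ofReal_ne_top]
  calc cE a b 0 + ENNReal.ofReal β * ∫⁻ x in Ioi (0:ℝ), phi a b x * ENNReal.ofReal (wf a b x)
      ≤ ENNReal.ofReal (cR a b 0)
        + ENNReal.ofReal β * ENNReal.ofReal (2 * Real.sqrt (cR a b 0)) := by
        apply add_le_add
        · rw [cE_eq_ofReal hfin le_rfl]
        · exact mul_le_mul_right (L1 ha hapos hb hfin le_rfl) _
    _ = ENNReal.ofReal (cR a b 0 + β * (2 * Real.sqrt (cR a b 0))) := by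
        rw [← ENNReal.ofReal_mul hβnn,
          ← ENNReal.ofReal_add (p := cR a b 0) (q := β * (2 * Real.sqrt (cR a b 0)))
            ENNReal.toReal_nonneg (by positivity)]

end iter

section iter2
variable (ha : ContDiffOn ℝ 1 a (Ici 0)) (hapos : ∀ x ∈ Ici (0:ℝ), 0 < a x)
  (hb : ContinuousOn b (Ici 0)) (hfin : cE a b 0 < ⊤)
  {lam : ℝ} (hlam : 0 < lam)

include ha hapos hb in
lemma meas_S1f (f : ℝ → ℝ≥0∞) : AEMeasurable (S1 a b f) (volume.restrict (Ioi 0)) := by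
  have hanti : Antitone (fun x => ∫⁻ z in Ioi x, f z * ENNReal.ofReal (wf a b z)) :=
    fun s t hst => lintegral_mono_set (Ioi_subset_Ioi hst)
  exact (aemeas_Af ha hapos hb).mul hanti.measurable.aemeasurable

lemma meas_S2f (f : ℝ → ℝ≥0∞) : AEMeasurable (S2 a b f) (volume.restrict (Ioi 0)) := by
  have hmono : Monotone (S2 a b f) := fun s t hst =>
    lintegral_mono_set (Set.Ioo_subset_Ioo_right hst)
  exact hmono.measurable.aemeasurable

include ha hapos hb in
lemma meas_Titer (f : ℝ → ℝ≥0∞) :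
    AEMeasurable (Titer a b lam f) (volume.restrict (Ioi 0)) :=
  aemeasurable_const.add ((((meas_S1f ha hapos hb f).add (meas_S2f f))).const_mul _)

include ha hapos hb in
lemma meas_iter (n : ℕ) :
    AEMeasurable ((Titer a b lam)^[n] fun _ => 1) (volume.restrict (Ioi 0)) := by
  cases n with
  | zero => exact aemeasurable_const
  | succ n =>
    rw [Function.iterate_succ_apply']
    exact meas_Titer ha hapos hb _

lemma iter_mono_succ : ∀ n : ℕ, ∀ z ∈ Ioi (0:ℝ),
    (Titer a b lam)^[n] (fun _ => 1) z ≤ (Titer a b lam)^[n+1] (fun _ => 1) z := by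
  intro n
  induction n with
  | zero => intro z _; exact le_self_add
  | succ n ih =>
    intro z hz
    rw [Function.iterate_succ_apply', Function.iterate_succ_apply' _ (n+1)]
    exact Titer_mono ih hz

lemma iter_monotone {z : ℝ} (hz : z ∈ Ioi (0:ℝ)) :
    Monotone (fun n => (Titer a b lam)^[n] (fun _ => 1) z) :=
  monotone_nat_of_le_succ (fun n => iter_mono_succ n z hz)

include ha hapos hb in
lemma S1_sup {x : ℝ} (hx : 0 < x) :
    S1 a b (fun z => ⨆ n, (Titer a b lam)^[n] (fun _ => 1) z) x
      = ⨆ n, S1 a b ((Titer a b lam)^[n] fun _ => 1) x := by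
  rw [S1_eq]
  have h1 : ∀ z, (⨆ n, (Titer a b lam)^[n] (fun _ => 1) z) * ENNReal.ofReal (wf a b z)
      = ⨆ n, ((Titer a b lam)^[n] (fun _ => 1) z * ENNReal.ofReal (wf a b z)) := by
    intro z
    exact ENNReal.iSup_mul _ _
  rw [lintegral_congr h1]
  have haemw : AEMeasurable (fun z => ENNReal.ofReal (wf a b z)) (volume.restrict (Ioi x)) :=
    (aemeas_w ha hapos hb).mono_measure (Measure.restrict_mono (Ioi_subset_Ioi hx.le) le_rfl)
  rw [lintegral_iSup' (f := fun n z => (Titer a b lam)^[n] (fun _ => 1) z * ENNReal.ofReal (wf a b z)) (fun n => ((meas_iter ha hapos hb (lam := lam) n).mono_measure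
      (Measure.restrict_mono (Ioi_subset_Ioi hx.le) le_rfl)).mul haemw) ?_]
  · rw [ENNReal.mul_iSup]
    exact iSup_congr (fun n => by rw [S1_eq])
  · rw [ae_restrict_iff' measurableSet_Ioi]
    refine Filter.Eventually.of_forall (fun z hz => ?_)
    intro m n hmn
    exact mul_le_mul_left (iter_monotone (lt_trans hx hz) hmn) _

include ha hapos hb in
lemma S2_sup {x : ℝ} (hx : 0 < x) :
    S2 a b (fun z => ⨆ n, (Titer a b lam)^[n] (fun _ => 1) z) x
      = ⨆ n, S2 a b ((Titer a b lam)^[n] fun _ => 1) x := by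
  rw [S2_eq]
  have h1 : ∀ z, (⨆ n, (Titer a b lam)^[n] (fun _ => 1) z)
        * ENNReal.ofReal (wf a b z * Af a b z)
      = ⨆ n, ((Titer a b lam)^[n] (fun _ => 1) z * ENNReal.ofReal (wf a b z * Af a b z)) := by
    intro z
    exact ENNReal.iSup_mul _ _
  rw [lintegral_congr h1]
  have haemw : AEMeasurable (fun z => ENNReal.ofReal (wf a b z * Af a b z))
      (volume.restrict (Ioo 0 x)) :=
    (aemeas_wA ha hapos hb).mono_measure (Measure.restrict_mono Ioo_subset_Ioi_self le_rfl)
  rw [lintegral_iSup' (f := fun n z => (Titer a b lam)^[n] (fun _ => 1) z * ENNReal.ofReal (wf a b z * Af a b z)) (fun n => ((meas_iter ha hapos hb (lam := lam) n).mono_measure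
      (Measure.restrict_mono Ioo_subset_Ioi_self le_rfl)).mul haemw) ?_]
  · exact iSup_congr (fun n => by rw [S2_eq])
  · rw [ae_restrict_iff' measurableSet_Ioo]
    refine Filter.Eventually.of_forall (fun z hz => ?_)
    intro m n hmn
    exact mul_le_mul_left (iter_monotone hz.1 hmn) _

include ha hapos hb in
lemma sup_fixed {x : ℝ} (hx : 0 < x) :
    (⨆ n, (Titer a b lam)^[n] (fun _ => 1) x)
      = 1 + 2 * ENNReal.ofReal lam *
        (S1 a b (fun z => ⨆ n, (Titer a b lam)^[n] (fun _ => 1) z) x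
          + S2 a b (fun z => ⨆ n, (Titer a b lam)^[n] (fun _ => 1) z) x) := by
  set u : ℕ → ℝ → ℝ≥0∞ := fun n => (Titer a b lam)^[n] (fun _ => 1) with hu
  have hshift : (⨆ n, u n x) = ⨆ n, u (n+1) x := by
    apply le_antisymm
    · exact iSup_le (fun n => le_trans (iter_mono_succ n x hx) (le_iSup (fun m => u (m+1) x) n))
    · exact iSup_le (fun n => le_iSup (fun m => u m x) (n+1))
  rw [hshift]
  have hstep : ∀ n, u (n+1) x = 1 + 2 * ENNReal.ofReal lam * (S1 a b (u n) x + S2 a b (u n) x) := by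
    intro n
    rw [hu]
    simp only
    rw [Function.iterate_succ_apply']
    rfl
  have hs1mono : Monotone (fun n => S1 a b (u n) x) :=
    monotone_nat_of_le_succ (fun n => S1_mono (iter_mono_succ n) hx)
  have hs2mono : Monotone (fun n => S2 a b (u n) x) :=
    monotone_nat_of_le_succ (fun n => S2_mono (iter_mono_succ n) hx)
  calc (⨆ n, u (n+1) x)
      = ⨆ n, (1 + 2 * ENNReal.ofReal lam * (S1 a b (u n) x + S2 a b (u n) x)) :=
        iSup_congr hstep
    _ = 1 + 2 * ENNReal.ofReal lam * ((⨆ n, S1 a b (u n) x) + ⨆ n, S2 a b (u n) x) := by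
        rw [ENNReal.iSup_add_iSup (fun i j => ⟨max i j,
          add_le_add (hs1mono (le_max_left i j)) (hs2mono (le_max_right i j))⟩)]
        rw [ENNReal.mul_iSup, ENNReal.add_iSup]
    _ = 1 + 2 * ENNReal.ofReal lam *
        (S1 a b (fun z => ⨆ n, u n z) x + S2 a b (fun z => ⨆ n, u n z) x) := by
        rw [S1_sup ha hapos hb hx, S2_sup ha hapos hb hx]

include ha hapos hb in
lemma lint_Adf {x : ℝ} (hx : 0 ≤ x) :
    ∫⁻ y in Ioo 0 x, ENNReal.ofReal (Adf a b y) = ENNReal.ofReal (Af a b x) := by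
  rw [setLIntegral_congr (MeasureTheory.Ioo_ae_eq_Ioc (a := (0:ℝ)) (b := x))]
  rw [← MeasureTheory.ofReal_integral_eq_lintegral_ofReal]
  · rw [Af, intervalIntegral.integral_of_le hx]
  · exact (((cont_Adf ha hapos hb).mono (fun z hz => hz.1)).integrableOn_Icc).mono_set
      Ioc_subset_Icc_self
  · exact (ae_restrict_iff' measurableSet_Ioc).2
      (Filter.Eventually.of_forall (fun z hz => Adf_nonneg ha hapos hb hz.1.le))

end iter2

section fubini
variable (ha : ContDiffOn ℝ 1 a (Ici 0)) (hapos : ∀ x ∈ Ici (0:ℝ), 0 < a x)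
  (hb : ContinuousOn b (Ici 0))

set_option maxHeartbeats 1000000 in
include ha hapos hb in
lemma G_fubini (f : ℝ → ℝ≥0∞) (hf : AEMeasurable f (volume.restrict (Ioi 0)))
    {x : ℝ} (hx : 0 < x) :
    ∫⁻ y in Ioo 0 x, ENNReal.ofReal (Adf a b y)
        * ∫⁻ z in Ioi y, f z * ENNReal.ofReal (wf a b z)
      = S1 a b f x + S2 a b f x := by
  set μ0 := volume.restrict (Ioi (0:ℝ)) with hμ0
  have hgw : AEMeasurable (fun z => f z * ENNReal.ofReal (wf a b z)) μ0 :=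
    hf.mul (aemeas_w ha hapos hb)
  obtain ⟨h0, hh0m, hh0e⟩ := hgw
  have hadf : AEMeasurable (Adf a b) μ0 :=
    ((cont_Adf ha hapos hb).mono Ioi_subset_Ici_self).aemeasurable measurableSet_Ioi
  obtain ⟨adm, hadmm, hadme⟩ := hadf
  have hinner : ∀ y : ℝ, 0 < y → (∫⁻ z in Ioi y, f z * ENNReal.ofReal (wf a b z))
      = ∫⁻ z in Ioi y, h0 z := by
    intro y hy
    exact lintegral_congr_ae (ae_restrict_of_ae_restrict_of_subset (Ioi_subset_Ioi hy.le) hh0e)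
  have hsplit : ∀ y : ℝ, 0 < y → y < x → (∫⁻ z in Ioi y, h0 z)
      = (∫⁻ z in Ioc y x, h0 z) + ∫⁻ z in Ioi x, h0 z := by
    intro y _ hyx
    rw [← lintegral_union measurableSet_Ioi (Set.Ioc_disjoint_Ioi le_rfl),
      Set.Ioc_union_Ioi_eq_Ioi hyx.le]
  set J : ℝ → ℝ≥0∞ := fun y => ∫⁻ z in Ioc y x, h0 z with hJ
  have hJanti : Antitone J := fun s t hst =>
    lintegral_mono_set (fun z hz => ⟨lt_of_le_of_lt hst hz.1, hz.2⟩)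
  set K : ℝ≥0∞ := ∫⁻ z in Ioi x, h0 z with hK
  have hLHS : ∫⁻ y in Ioo 0 x, ENNReal.ofReal (Adf a b y)
        * ∫⁻ z in Ioi y, f z * ENNReal.ofReal (wf a b z)
      = ∫⁻ y in Ioo 0 x, (ENNReal.ofReal (adm y) * J y + ENNReal.ofReal (adm y) * K) := by
    apply lintegral_congr_ae
    have h1 : ∀ᵐ y ∂(volume.restrict (Ioo 0 x)), Adf a b y = adm y :=
      ae_restrict_of_ae_restrict_of_subset Ioo_subset_Ioi_self hadme
    filter_upwards [h1, ae_restrict_mem measurableSet_Ioo] with y hy hymem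
    rw [hinner y hymem.1, hsplit y hymem.1 hymem.2, hy, mul_add]
  have haddm : AEMeasurable (fun y => ENNReal.ofReal (adm y) * J y)
      (volume.restrict (Ioo 0 x)) :=
    (ENNReal.measurable_ofReal.comp hadmm).aemeasurable.mul hJanti.measurable.aemeasurable
  rw [hLHS, lintegral_add_left' haddm]
  have hsecond : ∫⁻ y in Ioo 0 x, ENNReal.ofReal (adm y) * K = S1 a b f x := by
    have hc : ∀ᵐ y ∂(volume.restrict (Ioo 0 x)),
        ENNReal.ofReal (adm y) * K = ENNReal.ofReal (Adf a b y) * K := by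
      filter_upwards [ae_restrict_of_ae_restrict_of_subset Ioo_subset_Ioi_self hadme] with y hy
      rw [hy]
    have haem2 : AEMeasurable (fun y => ENNReal.ofReal (Adf a b y))
        (volume.restrict (Ioo 0 x)) :=
      (aemeas_Adf ha hapos hb).mono_measure (Measure.restrict_mono Ioo_subset_Ioi_self le_rfl)
    rw [lintegral_congr_ae hc, lintegral_mul_const'' K haem2,
      lint_Adf ha hapos hb hx.le, hK, ← hinner x hx, S1_eq]
  rw [hsecond]
  have hfirst : ∫⁻ y in Ioo 0 x, ENNReal.ofReal (adm y) * J y = S2 a b f x := by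
    have hJind : ∀ y : ℝ, 0 < y → J y = ∫⁻ z in Ioc 0 x, (Ioi y).indicator h0 z := by
      intro y hy
      have hset : Ioi y ∩ Ioc 0 x = Ioc y x := by
        ext z
        constructor
        · rintro ⟨h1, _, h3⟩; exact ⟨h1, h3⟩
        · rintro ⟨h1, h2⟩; exact ⟨h1, lt_trans hy h1, h2⟩
      rw [lintegral_indicator measurableSet_Ioi,
        Measure.restrict_restrict measurableSet_Ioi, hset]
    have hpull : ∀ y : ℝ, 0 < y → ENNReal.ofReal (adm y) * J y
        = ∫⁻ z in Ioc 0 x, ({q : ℝ × ℝ | q.1 < q.2}).indicator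
            (fun q => ENNReal.ofReal (adm q.1) * h0 q.2) (y, z) := by
      intro y hy
      rw [hJind y hy, ← lintegral_const_mul' _ _ ENNReal.ofReal_ne_top]
      apply lintegral_congr
      intro z
      by_cases hyz : y < z
      · simp only [Set.indicator_apply, mem_Ioi, Set.mem_setOf_eq, hyz, if_true]
      · simp only [Set.indicator_apply, mem_Ioi, Set.mem_setOf_eq, hyz, if_false, mul_zero]
    have hstep1 : ∫⁻ y in Ioo 0 x, ENNReal.ofReal (adm y) * J y
        = ∫⁻ y in Ioo 0 x, ∫⁻ z in Ioc 0 x,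
            ({q : ℝ × ℝ | q.1 < q.2}).indicator
              (fun q => ENNReal.ofReal (adm q.1) * h0 q.2) (y, z) := by
      apply lintegral_congr_ae
      filter_upwards [ae_restrict_mem measurableSet_Ioo] with y hy
      exact hpull y hy.1
    have hprodmeas : AEMeasurable (Function.uncurry (fun y z =>
        ({q : ℝ × ℝ | q.1 < q.2}).indicator
          (fun q => ENNReal.ofReal (adm q.1) * h0 q.2) (y, z)))
        ((volume.restrict (Ioo 0 x)).prod (volume.restrict (Ioc 0 x))) := by
      apply Measurable.aemeasurable
      have huncurry : (Function.uncurry (fun y z =>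
          ({q : ℝ × ℝ | q.1 < q.2}).indicator
            (fun q => ENNReal.ofReal (adm q.1) * h0 q.2) (y, z)))
          = ({q : ℝ × ℝ | q.1 < q.2}).indicator
            (fun q => ENNReal.ofReal (adm q.1) * h0 q.2) := rfl
      rw [huncurry]
      exact Measurable.indicator
        ((ENNReal.measurable_ofReal.comp (hadmm.comp measurable_fst)).mul
          (hh0m.comp measurable_snd))
        (measurableSet_lt measurable_fst measurable_snd)
    rw [hstep1, lintegral_lintegral_swap hprodmeas]
    have hinner2 : ∀ z : ℝ, 0 < z → z ≤ x → (∫⁻ y in Ioo 0 x,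
        ({q : ℝ × ℝ | q.1 < q.2}).indicator
          (fun q => ENNReal.ofReal (adm q.1) * h0 q.2) (y, z))
        = ENNReal.ofReal (Af a b z) * h0 z := by
      intro z hz hzx
      have hind : ∀ y : ℝ, ({q : ℝ × ℝ | q.1 < q.2}).indicator
          (fun q => ENNReal.ofReal (adm q.1) * h0 q.2) (y, z)
          = (Iio z).indicator (fun y => ENNReal.ofReal (adm y) * h0 z) y := by
        intro y
        by_cases hyz : y < z
        · simp only [Set.indicator_apply, mem_Iio, Set.mem_setOf_eq, hyz, if_true]
        · simp only [Set.indicator_apply, mem_Iio, Set.mem_setOf_eq, hyz, if_false]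
      rw [lintegral_congr hind, lintegral_indicator measurableSet_Iio,
        Measure.restrict_restrict measurableSet_Iio]
      have hseteq : Iio z ∩ Ioo 0 x = Ioo 0 z := by
        ext y
        constructor
        · rintro ⟨h1, h2, _⟩; exact ⟨h2, h1⟩
        · rintro ⟨h1, h2⟩; exact ⟨h2, h1, lt_of_lt_of_le h2 hzx⟩
      have haem3 : AEMeasurable (fun y => ENNReal.ofReal (adm y))
          (volume.restrict (Ioo 0 z)) :=
        (ENNReal.measurable_ofReal.comp hadmm).aemeasurable
      rw [hseteq, lintegral_mul_const'' (h0 z) haem3]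
      have hadcongr : ∫⁻ y in Ioo 0 z, ENNReal.ofReal (adm y)
          = ∫⁻ y in Ioo 0 z, ENNReal.ofReal (Adf a b y) := by
        apply lintegral_congr_ae
        filter_upwards [ae_restrict_of_ae_restrict_of_subset Ioo_subset_Ioi_self hadme] with y hy
        rw [hy]
      rw [hadcongr, lint_Adf ha hapos hb hz.le]
    have hstep2 : ∫⁻ z in Ioc 0 x, (∫⁻ y in Ioo 0 x,
        ({q : ℝ × ℝ | q.1 < q.2}).indicator
          (fun q => ENNReal.ofReal (adm q.1) * h0 q.2) (y, z))
        = ∫⁻ z in Ioc 0 x, ENNReal.ofReal (Af a b z) * h0 z := by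
      apply lintegral_congr_ae
      filter_upwards [ae_restrict_mem measurableSet_Ioc] with z hz
      exact hinner2 z hz.1 hz.2
    rw [hstep2]
    have hstep3 : ∫⁻ z in Ioc 0 x, ENNReal.ofReal (Af a b z) * h0 z
        = ∫⁻ z in Ioc 0 x, f z * ENNReal.ofReal (wf a b z * Af a b z) := by
      apply lintegral_congr_ae
      have he : ∀ᵐ z ∂(volume.restrict (Ioc 0 x)),
          f z * ENNReal.ofReal (wf a b z) = h0 z :=
        ae_restrict_of_ae_restrict_of_subset (fun z hz => hz.1) hh0e
      filter_upwards [he] with z hz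
      rw [← hz, ENNReal.ofReal_mul (wf_pos (a:=a) (b:=b) z).le]
      ring
    rw [hstep3, S2_eq]
    exact (setLIntegral_congr (MeasureTheory.Ioo_ae_eq_Ioc (a := (0:ℝ)) (b := x))).symm
  rw [hfirst, add_comm]

end fubini
end Stmt18Aux

set_option maxHeartbeats 1000000 in
theorem stmt18 (a b : ℝ → ℝ)
    (ha : ContDiffOn ℝ 1 a (Ici 0)) (hapos : ∀ x ∈ Ici (0:ℝ), 0 < a x)
    (hb : ContinuousOn b (Ici 0))
    (hinf : ∫⁻ x in Ioi (0:ℝ),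
        ENNReal.ofReal ((a x)⁻¹ * Real.exp (-2 * Bfun a b x)) = ⊤)
    (hfin : ∫⁻ x in Ioi (0:ℝ), ENNReal.ofReal (Real.exp (2 * Bfun a b x)) < ⊤)
    (hΩ : OmegaPlus a b < ⊤)
    (lam : ℝ) (hlam : 0 < lam) :
    (∀ n : ℕ, 1 ≤ n →
      wNorm a b ((Titer a b lam)^[n] (fun _ => 1)) ≤
        (1 + ∑ k ∈ Finset.Icc 1 n, (8 * ENNReal.ofReal lam * OmegaPlus a b) ^ k) *
          wNorm a b (fun _ => 1)) ∧
    (ENNReal.ofReal lam < 1 / (8 * OmegaPlus a b) →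
      (⨆ n : ℕ, wNorm a b ((Titer a b lam)^[n] (fun _ => 1))) < ⊤ ∧
      (∀ᵐ x ∂(volume.restrict (Ioi (0:ℝ))),
        (⨆ n : ℕ, (Titer a b lam)^[n] (fun _ => 1) x) < ⊤) ∧
      (∀ x ∈ Ioi (0:ℝ),
        (⨆ n : ℕ, (Titer a b lam)^[n] (fun _ => 1) x) =
          1 + 2 * ENNReal.ofReal lam *
            ∫⁻ y in Ioo (0:ℝ) x,
              ENNReal.ofReal ((a y)⁻¹ * Real.exp (-2 * Bfun a b y)) *
                ∫⁻ z in Ioi y,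
                  (⨆ n : ℕ, (Titer a b lam)^[n] (fun _ => 1) z) *
                    ENNReal.ofReal (Real.exp (2 * Bfun a b z)))) := by
  classical
  have hfin' : Stmt18Aux.cE a b 0 < ⊤ := hfin
  set Ωr : ℝ := (OmegaPlus a b).toReal with hΩrdef
  have hΩne : OmegaPlus a b ≠ ⊤ := hΩ.ne
  have hΩr0 : 0 ≤ Ωr := ENNReal.toReal_nonneg
  have hΩeq : OmegaPlus a b = ENNReal.ofReal Ωr := (ENNReal.ofReal_toReal hΩne).symm
  have hAC : ∀ z, 0 < z → Stmt18Aux.Af a b z * Stmt18Aux.cR a b z ≤ Ωr := by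
    intro z hz
    have h1 : ENNReal.ofReal (Stmt18Aux.Af a b z) * Stmt18Aux.cE a b z ≤ OmegaPlus a b :=
      le_biSup (fun x => ENNReal.ofReal (∫ y in (0:ℝ)..x, (a y)⁻¹ * Real.exp (-2 * Bfun a b y))
        * ∫⁻ y in Ioi x, ENNReal.ofReal (Real.exp (2 * Bfun a b y))) hz
    rw [Stmt18Aux.cE_eq_ofReal hfin' hz.le,
      ← ENNReal.ofReal_mul (Stmt18Aux.Af_nonneg ha hapos hb hz.le)] at h1
    have h2 := ENNReal.toReal_mono hΩne h1
    have hnn : 0 ≤ Stmt18Aux.Af a b z * Stmt18Aux.cR a b z :=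
      mul_nonneg (Stmt18Aux.Af_nonneg ha hapos hb hz.le) ENNReal.toReal_nonneg
    calc Stmt18Aux.Af a b z * Stmt18Aux.cR a b z
        = (ENNReal.ofReal (Stmt18Aux.Af a b z * Stmt18Aux.cR a b z)).toReal :=
          (ENNReal.toReal_ofReal hnn).symm
      _ ≤ Ωr := h2
  have hP : ∀ n : ℕ, wNorm a b ((Titer a b lam)^[n] fun _ => 1)
      ≤ (1 + ∑ k ∈ Finset.Icc 1 n, (8 * ENNReal.ofReal lam * OmegaPlus a b) ^ k)
          * wNorm a b (fun _ => 1) := by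
    intro n
    set rr : ℝ := 8 * lam * Ωr with hrdef
    have hr0 : 0 ≤ rr := by positivity
    set c0 := Stmt18Aux.cR a b 0 with hc0def
    have hc0 : 0 ≤ c0 := ENNReal.toReal_nonneg
    have hsum0 : 0 ≤ ∑ k ∈ Finset.Icc 1 n, rr ^ k :=
      Finset.sum_nonneg (fun k _ => pow_nonneg hr0 k)
    have h1 := Stmt18Aux.wNorm_iter_le ha hapos hb hfin' hΩr0 hAC hlam n
    have h2 : Stmt18Aux.bseq lam Ωr (Real.sqrt c0) n * (2 * Real.sqrt c0)
        = (∑ k ∈ Finset.Icc 1 n, rr ^ k) * c0 := by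
      rw [Stmt18Aux.bseq_sum, Real.mul_self_sqrt hc0]
    have h3 : (1 + ∑ k ∈ Finset.Icc 1 n, (8 * ENNReal.ofReal lam * OmegaPlus a b) ^ k)
        = ENNReal.ofReal (1 + ∑ k ∈ Finset.Icc 1 n, rr ^ k) := by
      rw [ENNReal.ofReal_add (by norm_num) hsum0, ENNReal.ofReal_one,
        ENNReal.ofReal_sum_of_nonneg (fun k _ => pow_nonneg hr0 k)]
      congr 1
      apply Finset.sum_congr rfl
      intro k _
      rw [ENNReal.ofReal_pow hr0]
      congr 1
      rw [hΩeq, hrdef, ENNReal.ofReal_mul (by positivity : (0:ℝ) ≤ 8*lam),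
        ENNReal.ofReal_mul (by norm_num : (0:ℝ) ≤ 8)]
      norm_num
    rw [h3, Stmt18Aux.wNorm_one hfin', ← ENNReal.ofReal_mul (by positivity)]
    refine le_trans h1 (ENNReal.ofReal_le_ofReal ?_)
    rw [h2]
    exact le_of_eq (by ring)
  constructor
  · exact fun n _ => hP n
  intro hsmall
  have hr1 : (8:ℝ≥0∞) * ENNReal.ofReal lam * OmegaPlus a b < 1 := by
    rcases eq_or_ne (OmegaPlus a b) 0 with h0 | h0
    · rw [h0, mul_zero]; exact zero_lt_one
    · have h8 : (8:ℝ≥0∞) * OmegaPlus a b ≠ 0 := by simp [h0]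
      have h8t : (8:ℝ≥0∞) * OmegaPlus a b ≠ ⊤ := ENNReal.mul_ne_top (by norm_num) hΩne
      rw [one_div] at hsmall
      have hlt := ENNReal.mul_lt_mul_left h8 h8t hsmall
      rw [ENNReal.inv_mul_cancel h8 h8t] at hlt
      calc (8:ℝ≥0∞) * ENNReal.ofReal lam * OmegaPlus a b
          = ENNReal.ofReal lam * (8 * OmegaPlus a b) := by ring
        _ < 1 := hlt
  have hgeom : ∀ n : ℕ, (1 + ∑ k ∈ Finset.Icc 1 n,
      ((8:ℝ≥0∞) * ENNReal.ofReal lam * OmegaPlus a b) ^ k)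
      ≤ (1 - (8:ℝ≥0∞) * ENNReal.ofReal lam * OmegaPlus a b)⁻¹ := by
    intro n
    set r : ℝ≥0∞ := 8 * ENNReal.ofReal lam * OmegaPlus a b
    have hins : Finset.range (n+1) = insert 0 (Finset.Icc 1 n) := by
      ext k
      simp only [Finset.mem_range, Finset.mem_insert, Finset.mem_Icc]
      omega
    have h1 : (1 + ∑ k ∈ Finset.Icc 1 n, r ^ k) = ∑ k ∈ Finset.range (n+1), r ^ k := by
      rw [hins, Finset.sum_insert (by simp), pow_zero]
    rw [h1, ← ENNReal.tsum_geometric r]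
    exact ENNReal.sum_le_tsum _
  have hMfin : (1 - (8:ℝ≥0∞) * ENNReal.ofReal lam * OmegaPlus a b)⁻¹
      * wNorm a b (fun _ => 1) < ⊤ := by
    apply ENNReal.mul_lt_top
    · rw [ENNReal.inv_lt_top]
      exact tsub_pos_iff_lt.2 hr1
    · rw [Stmt18Aux.wNorm_one hfin']
      exact ENNReal.ofReal_lt_top
  have hbound : ∀ n, wNorm a b ((Titer a b lam)^[n] fun _ => 1)
      ≤ (1 - (8:ℝ≥0∞) * ENNReal.ofReal lam * OmegaPlus a b)⁻¹ * wNorm a b (fun _ => 1) :=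
    fun n => le_trans (hP n) (mul_le_mul_left (hgeom n) _)
  have h2a : (⨆ n, wNorm a b ((Titer a b lam)^[n] fun _ => 1)) < ⊤ :=
    lt_of_le_of_lt (iSup_le hbound) hMfin
  refine ⟨h2a, ?_, ?_⟩
  · -- a.e. finiteness
    have hmeasn : ∀ n, AEMeasurable (fun x => (Titer a b lam)^[n] (fun _ => 1) x
        * ENNReal.ofReal (Real.exp (2 * Bfun a b x))) (volume.restrict (Ioi 0)) :=
      fun n => (Stmt18Aux.meas_iter ha hapos hb (lam := lam) n).mul
        (Stmt18Aux.aemeas_w ha hapos hb)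
    have heq : ∫⁻ x in Ioi (0:ℝ), (⨆ n, (Titer a b lam)^[n] (fun _ => 1) x)
        * ENNReal.ofReal (Real.exp (2 * Bfun a b x))
        = ⨆ n, wNorm a b ((Titer a b lam)^[n] fun _ => 1) := by
      have hpt : ∀ x, (⨆ n, (Titer a b lam)^[n] (fun _ => 1) x)
          * ENNReal.ofReal (Real.exp (2 * Bfun a b x))
          = ⨆ n, ((Titer a b lam)^[n] (fun _ => 1) x
            * ENNReal.ofReal (Real.exp (2 * Bfun a b x))) :=
        fun x => ENNReal.iSup_mul _ _
      rw [lintegral_congr hpt, lintegral_iSup' hmeasn ?_]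
      · rfl
      · filter_upwards [ae_restrict_mem measurableSet_Ioi] with x hx
        intro m n hmn
        exact mul_le_mul_left (Stmt18Aux.iter_monotone hx hmn) _
    have hne : ∫⁻ x in Ioi (0:ℝ), (⨆ n, (Titer a b lam)^[n] (fun _ => 1) x)
        * ENNReal.ofReal (Real.exp (2 * Bfun a b x)) ≠ ⊤ := by
      rw [heq]; exact h2a.ne
    have hae := MeasureTheory.ae_lt_top'
      ((AEMeasurable.iSup (fun n => Stmt18Aux.meas_iter ha hapos hb (lam := lam) n)).mul
        (Stmt18Aux.aemeas_w ha hapos hb)) hne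
    filter_upwards [hae] with x hxlt
    by_contra hc
    push_neg at hc
    have hceq : (⨆ n, (Titer a b lam)^[n] (fun _ => 1) x) = ⊤ := top_le_iff.1 hc
    have hxlt' : (⨆ n, (Titer a b lam)^[n] (fun _ => 1) x)
        * ENNReal.ofReal (Real.exp (2 * Bfun a b x)) < ⊤ := hxlt
    rw [hceq, ENNReal.top_mul (ne_of_gt (ENNReal.ofReal_pos.2 (Real.exp_pos _)))] at hxlt'
    exact lt_irrefl _ hxlt'
  · -- the integral equation
    intro x hx
    have hFmeas : AEMeasurable (fun z => ⨆ n, (Titer a b lam)^[n] (fun _ => 1) z)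
        (volume.restrict (Ioi 0)) :=
      AEMeasurable.iSup (fun n => Stmt18Aux.meas_iter ha hapos hb (lam := lam) n)
    have h1 := Stmt18Aux.sup_fixed ha hapos hb (lam := lam) hx
    have h2 := Stmt18Aux.G_fubini ha hapos hb
      (fun z => ⨆ n, (Titer a b lam)^[n] (fun _ => 1) z) hFmeas hx
    rw [h1, ← h2]
    rfl
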